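/- Let a, b > 0 with b < 3a, and suppose b is not an integer multiple of a but the least common multiple L of a and b (the smallest positive number that is an integer multiple of both) satisfies L = 2b. Then 1/a + 1/b − 1/L ≥ (6/5)·(1/a). -/

import Mathlib

lemma stmt_12_aux (a b c : ℝ) (ha : 0 < a) (hc : 0 < c) (hc5 : c ≤ 5)
    (hb' : b = c * a / 2) :
    1 / a + 1 / b - 1 / (2 * b) ≥ (6 / 5) * (1 / a) := by
  subst hb'
  rw [ge_iff_le, ← sub_nonneg]
  have h1 : c * a / 2 ≠ 0 := by positivity
  field_simp
  nlinarith

theorem stmt_12 (a b L : ℝ) (ha : 0 < a) (hb : 0 < b) (hb3 : b < 3 * a)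
    (hfrac : ¬ ∃ n : ℕ, b = n * a)
    (hL : 0 < L)
    (hLa : ∃ n : ℕ, L = n * a) (hLb : ∃ n : ℕ, L = n * b)
    (hmin : ∀ M : ℝ, 0 < M → (∃ n : ℕ, M = n * a) → (∃ n : ℕ, M = n * b) → L ≤ M)
    (hL2b : L = 2 * b) :
    1 / a + 1 / b - 1 / L ≥ (6 / 5) * (1 / a) := by
  obtain ⟨n, hn⟩ := hLa
  rw [hL2b] at hn
  have hnlt : n < 6 := by
    by_contra h
    push_neg at h
    have h6 : (6:ℝ) ≤ (n:ℝ) := by exact_mod_cast h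
    nlinarith
  have hodd : n % 2 = 1 := by
    rcases Nat.even_or_odd n with he | ho
    · obtain ⟨m, hm⟩ := he
      exfalso; apply hfrac
      refine ⟨m, ?_⟩
      subst hm; push_cast at hn ⊢; linarith
    · obtain ⟨k, hk⟩ := ho; omega
  subst hL2b
  interval_cases n <;> push_cast at hn <;> (try omega)
  · exact stmt_12_aux a b 1 ha (by norm_num) (by norm_num) (by linarith)
  · exact stmt_12_aux a b 3 ha (by norm_num) (by norm_num) (by linarith)
  · exact stmt_12_aux a b 5 ha (by norm_num) (by norm_num) (by linarith)
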